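/- Let G ∈ ℤ^{n×n} be a symmetric, positive definite matrix with det G = 1, whose entries satisfy |G_{i,j}| ≤ M for all i,j, where M is a positive integer. If z ∈ ℤⁿ satisfies zᵀGz ≤ n, then ‖z‖² ≤ (nM)^{n+1}. -/

import Mathlib

open Matrix

private lemma factorial_le_pow_pred : ∀ n : ℕ, n.factorial ≤ n ^ (n - 1) := by
  intro n
  induction n with
  | zero => simp
  | succ m ih =>
    cases m with
    | zero => simp [Nat.factorial]
    | succ k =>
      calc (k+2).factorial = (k+2) * (k+1).factorial := rfl
      _ ≤ (k+2) * (k+1) ^ k := Nat.mul_le_mul_left _ ih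
      _ ≤ (k+2) * (k+2) ^ k := Nat.mul_le_mul_left _ (Nat.pow_le_pow_left (by omega) k)
      _ = (k+2) ^ (k+1) := (pow_succ' _ _).symm

private lemma det_abs_le {n : ℕ} (A : Matrix (Fin n) (Fin n) ℤ) (M : ℤ)
    (hM : 0 ≤ M) (h : ∀ i j, |A i j| ≤ M) :
    |A.det| ≤ (n.factorial : ℤ) * M ^ n := by
  rw [Matrix.det_apply]
  calc |∑ σ : Equiv.Perm (Fin n), Equiv.Perm.sign σ • ∏ i, A (σ i) i|
      ≤ ∑ σ : Equiv.Perm (Fin n), |Equiv.Perm.sign σ • ∏ i, A (σ i) i| :=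
        Finset.abs_sum_le_sum_abs _ _
    _ ≤ ∑ _σ : Equiv.Perm (Fin n), M ^ n := by
        apply Finset.sum_le_sum
        intro σ _
        have h1 : |Equiv.Perm.sign σ • ∏ i, A (σ i) i| = |∏ i, A (σ i) i| := by
          rcases Int.units_eq_one_or (Equiv.Perm.sign σ) with hs | hs <;>
            simp [hs, Units.smul_def, abs_mul]
        rw [h1, Finset.abs_prod]
        calc ∏ i, |A (σ i) i| ≤ ∏ _i : Fin n, M :=
              Finset.prod_le_prod (fun i _ => abs_nonneg _) (fun i _ => h _ _)
          _ = M ^ n := by simp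
    _ = (n.factorial : ℤ) * M ^ n := by
        simp [Finset.sum_const, Fintype.card_perm]

/-- If `G` is symmetric positive definite with determinant 1 and entries
bounded by `M`, then any integer vector `z` with `zᵀGz ≤ n` satisfies
`‖z‖² ≤ (nM)^{n+1}`. -/
theorem short_vector_bit_complexity {n : ℕ} (G : Matrix (Fin n) (Fin n) ℤ)
    (hsymm : G.IsSymm) (hpos : (G.map (Int.cast : ℤ → ℝ)).PosDef)
    (hdet : G.det = 1) (M : ℤ) (hM : 1 ≤ M) (hbound : ∀ i j, |G i j| ≤ M)
    (z : Fin n → ℤ) (hz : z ⬝ᵥ G.mulVec z ≤ (n : ℤ)) :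
    ∑ i, (z i) ^ 2 ≤ ((n : ℤ) * M) ^ (n + 1) := by
  classical
  have hM0 : (0:ℤ) ≤ M := le_trans zero_le_one hM
  set S : ℤ := ∑ i, (z i) ^ 2 with hSdef
  have hS0 : 0 ≤ S := Finset.sum_nonneg fun i _ => sq_nonneg _
  rcases eq_or_lt_of_le hS0 with hS | hS
  · rw [← hS]; positivity
  -- the quadratic form is nonnegative on integer vectors, positive on nonzero
  have keycast : ∀ v : Fin n → ℤ,
      ((v ⬝ᵥ G.mulVec v : ℤ) : ℝ)
        = (fun i => (v i : ℝ)) ⬝ᵥ (G.map (Int.cast : ℤ → ℝ)).mulVec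
            (fun i => (v i : ℝ)) := by
    intro v
    simp only [dotProduct, mulVec, Matrix.map_apply]
    push_cast
    ring
  have key : ∀ v : Fin n → ℤ, 0 ≤ v ⬝ᵥ G.mulVec v := by
    intro v
    have h0 := hpos.posSemidef.dotProduct_mulVec_nonneg (fun i => (v i : ℝ))
    rw [star_trivial, ← keycast] at h0
    exact_mod_cast h0
  have keypos : ∀ v : Fin n → ℤ, v ≠ 0 → 0 < v ⬝ᵥ G.mulVec v := by
    intro v hv
    have hv' : (fun i => (v i : ℝ)) ≠ 0 := by
      intro hc
      apply hv
      funext i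
      have h2 := congrFun hc i
      simp only [Pi.zero_apply] at h2 ⊢
      exact_mod_cast h2
    have h0 := hpos.dotProduct_mulVec_pos (x := fun i => (v i : ℝ)) hv'
    rw [star_trivial, ← keycast] at h0
    exact_mod_cast h0
  have hzne : z ≠ 0 := by
    intro hc
    rw [hc] at hSdef
    simp at hSdef
    omega
  have hn : 0 < n := by
    rcases Nat.eq_zero_or_pos n with h | h
    · exfalso; apply hzne; subst h; funext i; exact absurd i.2 (by omega)
    · exact h
  set a : ℤ := z ⬝ᵥ G.mulVec z with ha
  set w : Fin n → ℤ := (adjugate G).mulVec z with hw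
  have hGw : G.mulVec w = z := by
    rw [hw, mulVec_mulVec, mul_adjugate, hdet, one_smul, one_mulVec]
  have hb : z ⬝ᵥ G.mulVec w = S := by
    rw [hGw, hSdef, dotProduct]
    exact Finset.sum_congr rfl fun i _ => (sq (z i)).symm ▸ (pow_two (z i)).symm
  have hsymmdot : ∀ u v : Fin n → ℤ, u ⬝ᵥ G.mulVec v = v ⬝ᵥ G.mulVec u := by
    intro u v
    have h2 : G *ᵥ u = u ᵥ* G := by rw [← vecMul_transpose, hsymm]
    rw [dotProduct_mulVec, ← h2, dotProduct_comm]
  set c : ℤ := w ⬝ᵥ G.mulVec w with hc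
  have hc' : c = z ⬝ᵥ ((adjugate G).mulVec z) := by
    rw [hc, hsymmdot, hGw, dotProduct_comm]
  -- Cauchy–Schwarz over ℤ
  have hapos : 0 < a := keypos z hzne
  have hexpand : (a • w - S • z) ⬝ᵥ G.mulVec (a • w - S • z)
      = a * (a * c) - a * (S * S) - S * (a * S) + S * (S * a) := by
    have h1 : w ⬝ᵥ G.mulVec z = S := by rw [hsymmdot, hb]
    simp only [Matrix.mulVec_sub, Matrix.mulVec_smul, dotProduct_sub,
      sub_dotProduct, smul_dotProduct, dotProduct_smul, smul_eq_mul]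
    rw [← hc, hb, h1, ← ha]
    ring
  have hcs : S ^ 2 ≤ a * c := by
    have h0 := key (a • w - S • z)
    rw [hexpand] at h0
    nlinarith
  -- bound on c via adjugate entries
  set B : ℤ := (n.factorial : ℤ) * M ^ n with hB
  have hB0 : 0 ≤ B := by positivity
  have hadj : ∀ i j, |adjugate G i j| ≤ B := by
    intro i j
    rw [Matrix.adjugate_apply]
    apply det_abs_le _ _ hM0
    intro k l
    by_cases hk : k = j
    · subst hk
      rw [Matrix.updateRow_self]
      rcases eq_or_ne l i with h | h
      · subst h; rw [Pi.single_eq_same]; simpa using hM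
      · rw [Pi.single_eq_of_ne h]; simpa using hM0
    · rw [Matrix.updateRow_ne hk]; exact hbound k l
  set T : ℤ := ∑ i, |z i| with hT
  have hT2 : T ^ 2 ≤ (n : ℤ) * S := by
    have := sq_sum_le_card_mul_sum_sq (s := (Finset.univ : Finset (Fin n)))
      (f := fun i => |z i|)
    simpa [sq_abs, hT, hSdef] using this
  have hTnn : 0 ≤ T := Finset.sum_nonneg fun i _ => abs_nonneg _
  have hcB : c ≤ B * T ^ 2 := by
    calc c ≤ |c| := le_abs_self c
      _ = |∑ i, z i * ((adjugate G).mulVec z) i| := by rw [hc']; rfl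
      _ ≤ ∑ i, |z i * ((adjugate G).mulVec z) i| := Finset.abs_sum_le_sum_abs _ _
      _ = ∑ i, |z i| * |((adjugate G).mulVec z) i| := by simp [abs_mul]
      _ ≤ ∑ i, |z i| * (B * T) := by
          apply Finset.sum_le_sum
          intro i _
          apply mul_le_mul_of_nonneg_left _ (abs_nonneg _)
          calc |((adjugate G).mulVec z) i| = |∑ j, adjugate G i j * z j| := rfl
            _ ≤ ∑ j, |adjugate G i j * z j| := Finset.abs_sum_le_sum_abs _ _
            _ ≤ ∑ j, B * |z j| := by
                apply Finset.sum_le_sum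
                intro j _
                rw [abs_mul]
                exact mul_le_mul_of_nonneg_right (hadj i j) (abs_nonneg _)
            _ = B * T := by rw [hT, Finset.mul_sum]
      _ = T * (B * T) := by rw [← Finset.sum_mul]
      _ = B * T ^ 2 := by ring
  -- combine
  have hfin : S ≤ (n : ℤ) ^ 2 * B := by
    have hc0 : 0 ≤ c := key w
    have h1 : S ^ 2 ≤ (n : ℤ) * (B * ((n : ℤ) * S)) := by
      calc S ^ 2 ≤ a * c := hcs
        _ ≤ (n : ℤ) * c := mul_le_mul_of_nonneg_right hz hc0
        _ ≤ (n : ℤ) * (B * T ^ 2) := by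
            apply mul_le_mul_of_nonneg_left hcB (by positivity)
        _ ≤ (n : ℤ) * (B * ((n : ℤ) * S)) := by
            apply mul_le_mul_of_nonneg_left _ (by positivity)
            exact mul_le_mul_of_nonneg_left hT2 hB0
    nlinarith
  have hfact : (n.factorial : ℤ) ≤ (n : ℤ) ^ (n - 1) := by
    exact_mod_cast factorial_le_pow_pred n
  calc S ≤ (n : ℤ) ^ 2 * B := hfin
    _ = (n : ℤ) ^ 2 * ((n.factorial : ℤ) * M ^ n) := by rw [hB]
    _ ≤ (n : ℤ) ^ 2 * ((n : ℤ) ^ (n - 1) * M ^ (n + 1)) := by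
        apply mul_le_mul_of_nonneg_left _ (by positivity)
        apply mul_le_mul hfact (pow_le_pow_right₀ hM (by omega)) (by positivity)
          (by positivity)
    _ = (n : ℤ) ^ (n + 1) * M ^ (n + 1) := by
        rw [← mul_assoc, ← pow_add]
        congr 2
        omega
    _ = ((n : ℤ) * M) ^ (n + 1) := (mul_pow _ _ _).symm
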